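/- Let P = P₁ ⊗ P₂ and Q = Q₁ ⊗ Q₂ be product probability measures with Pᵢ absolutely continuous with respect to Qᵢ. Then 1 + χ²(P‖Q) = (1 + χ²(P₁‖Q₁))·(1 + χ²(P₂‖Q₂)) (tensorization of the chi-square divergence). -/
import Mathlib


open MeasureTheory

lemma prod_withDensity_aux {Ω₁ Ω₂ : Type*} [MeasurableSpace Ω₁] [MeasurableSpace Ω₂]
    (μ : Measure Ω₁) (ν : Measure Ω₂) [SFinite μ] [SFinite ν]
    {f : Ω₁ → ENNReal} {g : Ω₂ → ENNReal} (hf : Measurable f) (hg : Measurable g)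
    [SigmaFinite (μ.withDensity f)] [SigmaFinite (ν.withDensity g)] :
    (μ.withDensity f).prod (ν.withDensity g)
      = (μ.prod ν).withDensity (fun p => f p.1 * g p.2) := by
  refine Measure.prod_eq ?_
  intro s t hs ht
  rw [withDensity_apply _ (hs.prod ht), ← Measure.prod_restrict,
    lintegral_prod_mul hf.aemeasurable hg.aemeasurable,
    withDensity_apply _ hs, withDensity_apply _ ht]

/-- Tensorization of the chi-square divergence: for product probability measures
`P = P₁ ⊗ P₂ ≪ Q = Q₁ ⊗ Q₂` (componentwise), `1 + χ²(P‖Q) = (1 + χ²(P₁‖Q₁))(1 + χ²(P₂‖Q₂))`,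
expressed via `1 + χ²(P‖Q) = ∫ (dP/dQ)² dQ`. -/
theorem stmt_4 {Ω₁ Ω₂ : Type*} [MeasurableSpace Ω₁] [MeasurableSpace Ω₂]
    (P₁ Q₁ : Measure Ω₁) (P₂ Q₂ : Measure Ω₂)
    [IsProbabilityMeasure P₁] [IsProbabilityMeasure Q₁]
    [IsProbabilityMeasure P₂] [IsProbabilityMeasure Q₂]
    (h₁ : P₁ ≪ Q₁) (h₂ : P₂ ≪ Q₂) :
    ∫⁻ ω, ((P₁.prod P₂).rnDeriv (Q₁.prod Q₂) ω)^2 ∂(Q₁.prod Q₂) =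
      (∫⁻ ω, (P₁.rnDeriv Q₁ ω)^2 ∂Q₁) * (∫⁻ ω, (P₂.rnDeriv Q₂ ω)^2 ∂Q₂) := by
  have hf := Measure.measurable_rnDeriv P₁ Q₁
  have hg := Measure.measurable_rnDeriv P₂ Q₂
  haveI : SigmaFinite (Q₁.withDensity (P₁.rnDeriv Q₁)) := by
    rw [Measure.withDensity_rnDeriv_eq _ _ h₁]; infer_instance
  haveI : SigmaFinite (Q₂.withDensity (P₂.rnDeriv Q₂)) := by
    rw [Measure.withDensity_rnDeriv_eq _ _ h₂]; infer_instance
  have hP : P₁.prod P₂ = (Q₁.prod Q₂).withDensity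
      (fun p => P₁.rnDeriv Q₁ p.1 * P₂.rnDeriv Q₂ p.2) := by
    conv_lhs => rw [← Measure.withDensity_rnDeriv_eq _ _ h₁,
      ← Measure.withDensity_rnDeriv_eq _ _ h₂]
    exact prod_withDensity_aux Q₁ Q₂ hf hg
  have hmeas : Measurable (fun p : Ω₁ × Ω₂ => P₁.rnDeriv Q₁ p.1 * P₂.rnDeriv Q₂ p.2) :=
    (hf.comp measurable_fst).mul (hg.comp measurable_snd)
  have hae : (P₁.prod P₂).rnDeriv (Q₁.prod Q₂)
      =ᵐ[Q₁.prod Q₂] fun p => P₁.rnDeriv Q₁ p.1 * P₂.rnDeriv Q₂ p.2 := by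
    rw [hP]
    exact Measure.rnDeriv_withDensity _ hmeas
  calc ∫⁻ ω, ((P₁.prod P₂).rnDeriv (Q₁.prod Q₂) ω)^2 ∂(Q₁.prod Q₂)
      = ∫⁻ p, (P₁.rnDeriv Q₁ p.1)^2 * (P₂.rnDeriv Q₂ p.2)^2 ∂(Q₁.prod Q₂) := by
        refine lintegral_congr_ae (hae.mono fun p hp => ?_)
        simp only [hp, mul_pow]
    _ = _ := lintegral_prod_mul (hf.pow_const 2).aemeasurable (hg.pow_const 2).aemeasurable
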